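/- arXiv:1201.6152 — 2 statements merged into one kernel-verified Lean document; each statement's English description precedes it below -/
import Mathlib

section
/- For every positive integer n, the following identity of rational functions in q holds: ∑_{k=1}^{n} ( (-1)^k (1 + q^k + q^{2k}) / ((−q;q)_k · [k]_q) ) · binom_q(2k, k)^{−1} = (1/(−q;q)_n) · ∑_{k=1}^{n} ( (-1)^k / [k]_q ) · binom_q(n+k, k)^{−1} − ∑_{k=1}^{n} q^k / ((−q;q)_k · [k]_q). -/
open Polynomial Finset

noncomputable section

/-- The `q`-integer `[n]_q = 1 + q + ⋯ + q^(n-1)`, as a polynomial in `ℚ[q]`. -/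
def qIntP (n : ℕ) : Polynomial ℚ := ∑ i ∈ Finset.range n, X ^ i

/-- The `q`-integer `[n]_q` viewed in the field of rational functions `ℚ(q)`. -/
def qN (n : ℕ) : RatFunc ℚ := algebraMap (Polynomial ℚ) (RatFunc ℚ) (qIntP n)

/-- The `q`-Pochhammer symbol `(q; q)_n = ∏_{j=1}^{n} (1 - q^j)` in `ℚ(q)`. -/
def qqPoch (n : ℕ) : RatFunc ℚ :=
  algebraMap (Polynomial ℚ) (RatFunc ℚ) (∏ j ∈ Finset.range n, (1 - X ^ (j + 1)))

/-- The `q`-Pochhammer symbol `(-q; q)_n = ∏_{j=1}^{n} (1 + q^j)` in `ℚ(q)`. -/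
def nqPoch (n : ℕ) : RatFunc ℚ :=
  algebraMap (Polynomial ℚ) (RatFunc ℚ) (∏ j ∈ Finset.range n, (1 + X ^ (j + 1)))

/-- The Gaussian `q`-binomial coefficient, as a rational function. -/
def qbin (n k : ℕ) : RatFunc ℚ :=
  if k ≤ n then qqPoch n / (qqPoch k * qqPoch (n - k)) else 0

/-- `qCong p r x y` means `x ≡ y (mod [p]_q^r)`: the difference `x - y` can be
written as a fraction whose numerator (a polynomial) is divisible by `[p]_q^r`
and whose denominator is relatively prime to `[p]_q`. -/
def qCong (p r : ℕ) (x y : RatFunc ℚ) : Prop :=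
  ∃ a b : Polynomial ℚ, IsCoprime b (qIntP p) ∧
    (x - y) * algebraMap (Polynomial ℚ) (RatFunc ℚ) b =
      algebraMap (Polynomial ℚ) (RatFunc ℚ) (qIntP p ^ r * a)

lemma one_sub_Xpow_ne (m : ℕ) (hm : 0 < m) : (1 : RatFunc ℚ) - RatFunc.X ^ m ≠ 0 := by
  have h : (1 : Polynomial ℚ) - X ^ m ≠ 0 := by
    intro h
    have := congrArg (Polynomial.eval 0) h
    simp [zero_pow hm.ne'] at this
  intro h0
  apply h
  apply RatFunc.algebraMap_injective ℚ
  simpa [map_sub, map_pow, RatFunc.algebraMap_X] using h0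

lemma one_add_Xpow_ne (m : ℕ) (hm : 0 < m) : (1 : RatFunc ℚ) + RatFunc.X ^ m ≠ 0 := by
  have h : (1 : Polynomial ℚ) + X ^ m ≠ 0 := by
    intro h
    have := congrArg (Polynomial.eval 0) h
    simp [zero_pow hm.ne'] at this
  intro h0
  apply h
  apply RatFunc.algebraMap_injective ℚ
  simpa [map_add, map_pow, RatFunc.algebraMap_X] using h0

lemma qN_eq (k : ℕ) : qN k = ∑ i ∈ Finset.range k, RatFunc.X ^ i := by
  simp [qN, qIntP, map_sum, map_pow, RatFunc.algebraMap_X]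

lemma qN_mul (k : ℕ) : qN k * (1 - RatFunc.X) = 1 - RatFunc.X ^ k := by
  rw [qN_eq]
  linear_combination -geom_sum_mul (RatFunc.X : RatFunc ℚ) k

lemma one_sub_X_ne : (1 : RatFunc ℚ) - RatFunc.X ≠ 0 := by
  simpa using one_sub_Xpow_ne 1 one_pos

lemma qN_ne (k : ℕ) (hk : 0 < k) : qN k ≠ 0 :=
  left_ne_zero_of_mul (by rw [qN_mul]; exact one_sub_Xpow_ne k hk)

lemma qN_div (k : ℕ) : qN k = (1 - RatFunc.X ^ k) / (1 - RatFunc.X) := by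
  rw [eq_div_iff one_sub_X_ne, qN_mul]

lemma qqPoch_succ (n : ℕ) : qqPoch (n + 1) = qqPoch n * (1 - RatFunc.X ^ (n + 1)) := by
  simp [qqPoch, prod_range_succ, map_mul, map_sub, map_pow, RatFunc.algebraMap_X]

lemma nqPoch_succ (n : ℕ) : nqPoch (n + 1) = nqPoch n * (1 + RatFunc.X ^ (n + 1)) := by
  simp [nqPoch, prod_range_succ, map_mul, map_add, map_pow, RatFunc.algebraMap_X]

lemma qqPoch_zero : qqPoch 0 = 1 := by simp [qqPoch]
lemma nqPoch_zero : nqPoch 0 = 1 := by simp [nqPoch]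

lemma qqPoch_ne (n : ℕ) : qqPoch n ≠ 0 := by
  induction n with
  | zero => simp [qqPoch_zero]
  | succ m ih => rw [qqPoch_succ]; exact mul_ne_zero ih (one_sub_Xpow_ne _ m.succ_pos)

lemma nqPoch_ne (n : ℕ) : nqPoch n ≠ 0 := by
  induction n with
  | zero => simp [nqPoch_zero]
  | succ m ih => rw [nqPoch_succ]; exact mul_ne_zero ih (one_add_Xpow_ne _ m.succ_pos)

lemma qbin_inv (a b : ℕ) : (qbin (a + b) b)⁻¹ = qqPoch b * qqPoch a / qqPoch (a + b) := by
  rw [qbin, if_pos (Nat.le_add_left b a), Nat.add_sub_cancel, inv_div]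

/-- Telescoping function for the induction step. -/
def Gaux (n k : ℕ) : RatFunc ℚ :=
  (-1 : RatFunc ℚ) ^ (k + 1) * RatFunc.X ^ (n + 1) * (1 - RatFunc.X) *
    (qqPoch k * qqPoch n) / (qqPoch (n + k) * (1 - RatFunc.X ^ (n + 1 + k)))

set_option maxHeartbeats 1600000 in
lemma summand_tel (n j : ℕ) :
    (-1 : RatFunc ℚ) ^ (j + 1) / qN (j + 1) * (qbin (n + 1 + (j + 1)) (j + 1))⁻¹ -
      (1 + RatFunc.X ^ (n + 1)) *
        ((-1 : RatFunc ℚ) ^ (j + 1) / qN (j + 1) * (qbin (n + (j + 1)) (j + 1))⁻¹) =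
    Gaux n (j + 1) - Gaux n j := by
  have e1 : n + 1 + (j + 1) = (n + j + 1) + 1 := by omega
  have e2 : n + (j + 1) = n + j + 1 := by omega
  rw [show qbin (n + 1 + (j + 1)) (j + 1) = qbin ((n + 1) + (j + 1)) (j + 1) from rfl,
    qbin_inv (n + 1) (j + 1),
    show qbin (n + (j + 1)) (j + 1) = qbin (n + (j + 1)) (j + 1) from rfl,
    qbin_inv n (j + 1), Gaux, Gaux]
  rw [show (n + 1) + (j + 1) = (n + j + 1) + 1 from by omega,
    show n + (j + 1) = (n + j) + 1 from by omega,
    qqPoch_succ (n + j + 1), qqPoch_succ (n + j), qqPoch_succ j, qqPoch_succ n,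
    qN_div]
  rw [show n + 1 + j = (n + j + 1) from by omega,
    show n + j + 1 + 1 = n + j + 2 from by omega]
  have h1 := one_sub_X_ne
  have h2 := one_sub_Xpow_ne (j + 1) j.succ_pos
  have h3 := one_sub_Xpow_ne (n + 1) n.succ_pos
  have h4 := one_sub_Xpow_ne (n + j + 1) (Nat.succ_pos _)
  have h5 := one_sub_Xpow_ne (n + j + 2) (Nat.succ_pos _)
  have h6 := qqPoch_ne j
  have h7 := qqPoch_ne n
  have h8 := qqPoch_ne (n + j)
  field_simp
  ring

lemma sum_tel (n : ℕ) :
    ∑ k ∈ Finset.Icc 1 n,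
        ((-1 : RatFunc ℚ) ^ k / qN k * (qbin (n + 1 + k) k)⁻¹ -
          (1 + RatFunc.X ^ (n + 1)) *
            ((-1 : RatFunc ℚ) ^ k / qN k * (qbin (n + k) k)⁻¹)) =
      Gaux n n - Gaux n 0 := by
  have key : ∀ m : ℕ,
      ∑ k ∈ Finset.Icc 1 m,
        ((-1 : RatFunc ℚ) ^ k / qN k * (qbin (n + 1 + k) k)⁻¹ -
          (1 + RatFunc.X ^ (n + 1)) *
            ((-1 : RatFunc ℚ) ^ k / qN k * (qbin (n + k) k)⁻¹)) =
      Gaux n m - Gaux n 0 := by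
    intro m
    induction m with
    | zero => simp
    | succ p ih =>
        rw [Finset.sum_Icc_succ_top (Nat.le_add_left 1 p), ih, summand_tel n p]
        ring
  exact key n

set_option maxHeartbeats 3200000 in
lemma stepA (n : ℕ) :
    (nqPoch (n + 1))⁻¹ *
        ∑ k ∈ Finset.Icc 1 (n + 1), (-1 : RatFunc ℚ) ^ k / qN k * (qbin (n + 1 + k) k)⁻¹
      = (nqPoch n)⁻¹ *
          ∑ k ∈ Finset.Icc 1 n, (-1 : RatFunc ℚ) ^ k / qN k * (qbin (n + k) k)⁻¹
        + RatFunc.X ^ (n + 1) / (nqPoch (n + 1) * qN (n + 1))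
        + (-1 : RatFunc ℚ) ^ (n + 1) *
            (1 + RatFunc.X ^ (n + 1) + RatFunc.X ^ (2 * (n + 1))) /
            (nqPoch (n + 1) * qN (n + 1)) * (qbin (2 * (n + 1)) (n + 1))⁻¹ := by
  have hsplit := Finset.sum_Icc_succ_top (Nat.le_add_left 1 n)
      (fun k => (-1 : RatFunc ℚ) ^ k / qN k * (qbin (n + 1 + k) k)⁻¹)
  rw [hsplit]
  have hS : ∑ k ∈ Finset.Icc 1 n, (-1 : RatFunc ℚ) ^ k / qN k * (qbin (n + 1 + k) k)⁻¹
      = (1 + RatFunc.X ^ (n + 1)) *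
          ∑ k ∈ Finset.Icc 1 n, (-1 : RatFunc ℚ) ^ k / qN k * (qbin (n + k) k)⁻¹
        + (Gaux n n - Gaux n 0) := by
    have := sum_tel n
    rw [Finset.sum_sub_distrib, ← Finset.mul_sum] at this
    linear_combination this
  rw [hS, nqPoch_succ]
  rw [show (2 : ℕ) * (n + 1) = (n + 1) + (n + 1) from by ring] 
  rw [qbin_inv (n + 1) (n + 1)]
  simp only [Gaux, qqPoch_zero, Nat.add_zero, mul_one]
  rw [show (n + 1) + (n + 1) = ((n + n) + 1) + 1 from by omega,
    qqPoch_succ ((n + n) + 1), qqPoch_succ (n + n), qqPoch_succ n, qN_div]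
  rw [show n + 1 + n = n + n + 1 from by omega,
    show n + n + 1 + 1 = n + n + 2 from by omega]
  have h1 := one_sub_X_ne
  have h3 := one_sub_Xpow_ne (n + 1) n.succ_pos
  have h4 := one_sub_Xpow_ne (n + n + 1) (Nat.succ_pos _)
  have h5 := one_sub_Xpow_ne (n + n + 2) (Nat.succ_pos _)
  have h7 := qqPoch_ne n
  have h8 := qqPoch_ne (n + n)
  have h9 := nqPoch_ne n
  have h10 := one_add_Xpow_ne (n + 1) n.succ_pos
  field_simp
  ring

lemma qid2_aux (n : ℕ) :
    ∑ k ∈ Finset.Icc 1 n,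
        (-1 : RatFunc ℚ) ^ k * (1 + RatFunc.X ^ k + RatFunc.X ^ (2 * k)) /
          (nqPoch k * qN k) * (qbin (2 * k) k)⁻¹
      = (nqPoch n)⁻¹ *
          ∑ k ∈ Finset.Icc 1 n, (-1 : RatFunc ℚ) ^ k / qN k * (qbin (n + k) k)⁻¹
        - ∑ k ∈ Finset.Icc 1 n, (RatFunc.X : RatFunc ℚ) ^ k / (nqPoch k * qN k) := by
  induction n with
  | zero => simp
  | succ m ih =>
      rw [Finset.sum_Icc_succ_top (Nat.le_add_left 1 m)
          (fun k => (-1 : RatFunc ℚ) ^ k * (1 + RatFunc.X ^ k + RatFunc.X ^ (2 * k)) /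
            (nqPoch k * qN k) * (qbin (2 * k) k)⁻¹),
        Finset.sum_Icc_succ_top (Nat.le_add_left 1 m)
          (fun k => (RatFunc.X : RatFunc ℚ) ^ k / (nqPoch k * qN k)),
        stepA m, ih]
      ring


/-- For every positive integer `n`, the identity of rational functions:
`∑_{k=1}^{n} ((-1)^k (1+q^k+q^{2k})/((−q;q)_k [k]_q)) binom_q(2k,k)⁻¹
  = (1/(−q;q)_n) ∑_{k=1}^{n} ((-1)^k/[k]_q) binom_q(n+k,k)⁻¹
    − ∑_{k=1}^{n} q^k/((−q;q)_k [k]_q)`. -/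
theorem qid2 (n : ℕ) (hn : 0 < n) :
    ∑ k ∈ Finset.Icc 1 n,
        (-1 : RatFunc ℚ) ^ k * (1 + RatFunc.X ^ k + RatFunc.X ^ (2 * k)) /
          (nqPoch k * qN k) * (qbin (2 * k) k)⁻¹
      = (nqPoch n)⁻¹ *
          ∑ k ∈ Finset.Icc 1 n, (-1 : RatFunc ℚ) ^ k / qN k * (qbin (n + k) k)⁻¹
        - ∑ k ∈ Finset.Icc 1 n, (RatFunc.X : RatFunc ℚ) ^ k / (nqPoch k * qN k) := by
  exact qid2_aux n
end
end

section
/- For every positive integer n, the following identity of rational numbers holds: (3/4) · ∑_{k=1}^{n} (1/k) · C(2k, k) = ∑_{k=1}^{n} (1/k) · C(n+k, k) · C(n, k)^{−1} − (1/2) · ∑_{k=1}^{n} 1/k. -/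
open Finset Nat

private def u (n k : ℕ) : ℚ :=
  ((n + k).factorial : ℚ) * ((n - k).factorial : ℚ) / ((n.factorial : ℚ) * (n.factorial : ℚ))

private lemma choose_ratio (n k : ℕ) (hk : k ≤ n) :
    ((n + k).choose k : ℚ) * ((n.choose k : ℚ))⁻¹ = u n k := by
  have h1 : ((n + k).choose k : ℚ) * (k.factorial : ℚ) * (n.factorial : ℚ)
      = ((n + k).factorial : ℚ) := by
    have := Nat.choose_mul_factorial_mul_factorial (Nat.le_add_left k n)
    rw [Nat.add_sub_cancel] at this
    exact_mod_cast this
  have h2 : ((n.choose k : ℚ)) * (k.factorial : ℚ) * ((n - k).factorial : ℚ)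
      = (n.factorial : ℚ) := by
    exact_mod_cast Nat.choose_mul_factorial_mul_factorial hk
  have hc : (n.choose k : ℚ) ≠ 0 := Nat.cast_ne_zero.mpr (Nat.choose_pos hk).ne'
  have hkf : (k.factorial : ℚ) ≠ 0 := by positivity
  have hnf : (n.factorial : ℚ) ≠ 0 := by positivity
  unfold u
  field_simp
  apply mul_right_cancel₀ hkf
  linear_combination (n.factorial : ℚ) * h1 - ((n + k).factorial : ℚ) * h2

private lemma u_self (n : ℕ) : u n n = ((2 * n).choose n : ℚ) := by
  have h := Nat.choose_mul_factorial_mul_factorial (Nat.le_mul_of_pos_left n two_pos)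
  rw [show 2 * n - n = n by omega] at h
  have hn : ((n.factorial : ℚ)) ≠ 0 := by positivity
  unfold u
  rw [Nat.sub_self, show n + n = 2 * n by ring]
  field_simp
  push_cast [← h]; ring

private lemma u_one (n : ℕ) (hn : 1 ≤ n) : u n 1 = ((n : ℚ) + 1) / n := by
  obtain ⟨m, rfl⟩ : ∃ m, n = m + 1 := ⟨n - 1, by omega⟩
  unfold u
  rw [show m + 1 + 1 = (m + 1) + 1 by rfl, Nat.add_sub_cancel, Nat.factorial_succ (m + 1),
    Nat.factorial_succ m]
  have h1 : ((m.factorial : ℚ)) ≠ 0 := by positivity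
  push_cast
  have h2 : ((m : ℚ) + 1) ≠ 0 := by positivity
  field_simp

private lemma tele (f : ℕ → ℚ) {n : ℕ} (hn : 1 ≤ n) :
    ∑ k ∈ Ico 1 n, (f (k + 1) - f k) = f n - f 1 := by
  rw [Finset.sum_Ico_eq_sub _ hn, Finset.sum_range_sub, Finset.sum_range_sub]
  simp

private lemma step_eq (n k : ℕ) (hkn : k < n) :
    ((n : ℚ) + 1 - (k + 1)) / 2 * u n (k + 1) - ((n : ℚ) + 1 - k) / 2 * u n k
      = (k : ℚ) * u n k := by
  obtain ⟨a, rfl⟩ : ∃ a, n = k + 1 + a := ⟨n - (k + 1), by omega⟩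
  have e1 : k + 1 + a + (k + 1) = (k + 1 + a + k) + 1 := by omega
  have e2 : k + 1 + a - (k + 1) = a := by omega
  have e3 : k + 1 + a - k = a + 1 := by omega
  simp only [u, e1, e2, e3, Nat.factorial_succ]
  have hF : ((k + 1 + a + k).factorial : ℚ) ≠ 0 := by positivity
  have hN : (((k + 1 + a).factorial : ℚ)) ≠ 0 := by positivity
  field_simp
  push_cast
  ring

private lemma sum_ku (n : ℕ) (hn : 1 ≤ n) :
    ∑ k ∈ Icc 1 n, (k : ℚ) * u n k
      = (2 * (n : ℚ) + 1) / 2 * ((2 * n).choose n : ℚ) - ((n : ℚ) + 1) / 2 := by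
  rw [← Finset.Ico_add_one_right_eq_Icc, Finset.sum_Ico_succ_top hn]
  have h1 : ∑ k ∈ Ico 1 n, (k : ℚ) * u n k
      = ∑ k ∈ Ico 1 n, ((((n : ℚ) + 1 - (k + 1)) / 2 * u n (k + 1))
          - (((n : ℚ) + 1 - k) / 2 * u n k)) := by
    refine Finset.sum_congr rfl fun k hk => ?_
    rw [Finset.mem_Ico] at hk
    exact (step_eq n k hk.2).symm
  rw [h1]
  have h2 := tele (fun k => ((n : ℚ) + 1 - k) / 2 * u n k) hn
  push_cast at h2
  rw [h2, u_self, u_one n hn]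
  have hn' : (n : ℚ) ≠ 0 := by positivity
  field_simp
  ring

private lemma gdiff (n k : ℕ) (hk1 : 1 ≤ k) (hk : k ≤ n) :
    (1 / (k : ℚ)) * (((n + 1) + k).choose k : ℚ) * (((n + 1).choose k : ℚ))⁻¹
      = (1 / (k : ℚ)) * ((n + k).choose k : ℚ) * ((n.choose k : ℚ))⁻¹
        - (k : ℚ) * u n k / ((n : ℚ) + 1) ^ 2 := by
  rw [mul_assoc, mul_assoc, choose_ratio n k hk,
    choose_ratio (n + 1) k (le_trans hk (Nat.le_succ n))]
  obtain ⟨a, rfl⟩ : ∃ a, n = k + a := ⟨n - k, by omega⟩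
  have e1 : k + a + 1 + k = (k + a + k) + 1 := by omega
  have e2 : k + a + 1 - k = a + 1 := by omega
  have e3 : k + a - k = a := by omega
  have e4 : k + a + 1 = (k + a) + 1 := rfl
  simp only [u, e1, e2, e3, e4, Nat.factorial_succ]
  have hF : ((k + a + k).factorial : ℚ) ≠ 0 := by positivity
  have hN : ((k + a).factorial : ℚ) ≠ 0 := by positivity
  have hA : ((a.factorial : ℚ)) ≠ 0 := by positivity
  have hk' : ((k : ℚ)) ≠ 0 := by positivity
  have hka : ((k : ℚ) + a + 1) ≠ 0 := by positivity
  field_simp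
  push_cast
  ring

/-- For every positive integer `n`, the rational-number identity:
`(3/4) ∑_{k=1}^{n} (1/k) C(2k,k)
  = ∑_{k=1}^{n} (1/k) C(n+k,k) C(n,k)⁻¹ − (1/2) ∑_{k=1}^{n} 1/k`. -/
theorem central_binomial_identity (n : ℕ) (hn : 0 < n) :
    (3 / 4 : ℚ) * ∑ k ∈ Finset.Icc 1 n, (1 / (k : ℚ)) * ((2 * k).choose k : ℚ)
      = ∑ k ∈ Finset.Icc 1 n,
          (1 / (k : ℚ)) * ((n + k).choose k : ℚ) * ((n.choose k : ℚ))⁻¹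
        - (1 / 2 : ℚ) * ∑ k ∈ Finset.Icc 1 n, (1 / (k : ℚ)) := by
  induction n, hn using Nat.le_induction with
  | base => norm_num
  | succ n hn ih =>
    rw [Finset.sum_Icc_succ_top (by omega : 1 ≤ n + 1),
      Finset.sum_Icc_succ_top (by omega : 1 ≤ n + 1),
      Finset.sum_Icc_succ_top (by omega : 1 ≤ n + 1)]
    have hsplit : ∑ k ∈ Finset.Icc 1 n,
        (1 / (k : ℚ)) * (((n + 1) + k).choose k : ℚ) * (((n + 1).choose k : ℚ))⁻¹
        = (∑ k ∈ Finset.Icc 1 n,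
            (1 / (k : ℚ)) * ((n + k).choose k : ℚ) * ((n.choose k : ℚ))⁻¹)
          - (∑ k ∈ Finset.Icc 1 n, (k : ℚ) * u n k) / ((n : ℚ) + 1) ^ 2 := by
      have hterm : ∀ k ∈ Finset.Icc 1 n,
          (1 / (k : ℚ)) * (((n + 1) + k).choose k : ℚ) * (((n + 1).choose k : ℚ))⁻¹
          = (1 / (k : ℚ)) * ((n + k).choose k : ℚ) * ((n.choose k : ℚ))⁻¹
            - (k : ℚ) * u n k / ((n : ℚ) + 1) ^ 2 := by
        intro k hk
        rw [Finset.mem_Icc] at hk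
        exact gdiff n k hk.1 hk.2
      rw [Finset.sum_congr rfl hterm, Finset.sum_sub_distrib, Finset.sum_div]
    rw [hsplit, sum_ku n hn]
    -- last terms
    have hchoose : ((n : ℚ) + 1) * ((2 * (n + 1)).choose (n + 1) : ℚ)
        = 2 * (2 * (n : ℚ) + 1) * ((2 * n).choose n : ℚ) := by
      have := Nat.succ_mul_centralBinom_succ n
      simp only [Nat.centralBinom] at this
      exact_mod_cast this
    have hself : (((n + 1).choose (n + 1) : ℚ)) = 1 := by
      rw [Nat.choose_self]; norm_num
    have hN : ((n : ℚ) + 1) ≠ 0 := by positivity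
    have hC2 : ((2 * (n + 1)).choose (n + 1) : ℚ)
        = 2 * (2 * (n : ℚ) + 1) * ((2 * n).choose n : ℚ) / ((n : ℚ) + 1) := by
      field_simp
      linear_combination hchoose
    rw [hself, show n + 1 + (n + 1) = 2 * (n + 1) by ring, hC2]
    push_cast
    rw [mul_add, ih]
    field_simp
    ring
end
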